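/- For any finite multiset A of nonnegative reals and any integer k ≥ 2, it holds that Ψ_{k-1}(A)^k ≤ Ψ_k(A)^{k-1}. -/

import Mathlib

/-- Complete homogeneous sum: sum of all monomials of total degree `k` (with
repetition) in the elements of the list. -/
noncomputable def hcomp : List ℝ → ℕ → ℝ
  | _, 0 => 1
  | [], _ + 1 => 0
  | a :: l, k + 1 => a * hcomp (a :: l) k + hcomp l (k + 1)
  termination_by l k => (l.length, k)

/-- `Ψ_k(A)`: `k!` times the sum of all monomials of total degree `k` in the
elements of `A`. -/
noncomputable def Psi (k : ℕ) (A : List ℝ) : ℝ := (k.factorial : ℝ) * hcomp A k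

open MeasureTheory Real Set Finset ENNReal

lemma hcomp_zero (l : List ℝ) : hcomp l 0 = 1 := by
  cases l <;> rw [hcomp]

lemma hcomp_nil (m : ℕ) : hcomp [] (m + 1) = 0 := by rw [hcomp]

lemma hcomp_cons (a : ℝ) (l : List ℝ) (m : ℕ) :
    hcomp (a :: l) (m + 1) = a * hcomp (a :: l) m + hcomp l (m + 1) := by rw [hcomp]

lemma hcomp_nonneg : ∀ (l : List ℝ), (∀ a ∈ l, 0 ≤ a) → ∀ m, 0 ≤ hcomp l m
  | [], _, 0 => by rw [hcomp_zero]; norm_num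
  | [], _, m + 1 => by rw [hcomp_nil]
  | a :: l, h, 0 => by rw [hcomp_zero]; norm_num
  | a :: l, h, m + 1 => by
      rw [hcomp_cons]
      have ha : 0 ≤ a := h a (List.mem_cons_self)
      have hl : ∀ b ∈ l, 0 ≤ b := fun b hb => h b (List.mem_cons_of_mem a hb)
      have h1 := hcomp_nonneg (a :: l) h m
      have h2 := hcomp_nonneg l hl (m + 1)
      positivity

lemma Psi_nonneg (m : ℕ) (l : List ℝ) (h : ∀ a ∈ l, 0 ≤ a) : 0 ≤ Psi m l := by
  unfold Psi
  have := hcomp_nonneg l h m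
  positivity

lemma Psi_zero (l : List ℝ) : Psi 0 l = 1 := by simp [Psi, hcomp_zero]

lemma Psi_nil (m : ℕ) : Psi (m + 1) [] = 0 := by simp [Psi, hcomp_nil]

lemma hcomp_cons_sum (a : ℝ) (l : List ℝ) :
    ∀ m : ℕ, hcomp (a :: l) m = ∑ i ∈ Finset.range (m + 1), a ^ i * hcomp l (m - i) := by
  intro m
  induction m with
  | zero => simp [hcomp_zero]
  | succ m ih =>
      rw [hcomp_cons, ih, Finset.sum_range_succ' (fun i => a ^ i * hcomp l (m + 1 - i)) (m + 1),
        Finset.mul_sum]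
      simp only [Nat.succ_sub_succ, pow_zero, one_mul, Nat.sub_zero]
      congr 1
      exact Finset.sum_congr rfl fun i _ => by ring

lemma Psi_cons (a : ℝ) (l : List ℝ) (m : ℕ) :
    Psi m (a :: l) = ∑ i ∈ Finset.range (m + 1),
      (m.choose i : ℝ) * (i.factorial : ℝ) * a ^ i * Psi (m - i) l := by
  unfold Psi
  rw [hcomp_cons_sum, Finset.mul_sum]
  apply Finset.sum_congr rfl
  intro i hi
  have hle : i ≤ m := Nat.lt_succ_iff.mp (Finset.mem_range.mp hi)
  have hfac : (m.factorial : ℝ) = (m.choose i : ℝ) * (i.factorial : ℝ) * ((m - i).factorial : ℝ) := by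
    rw [← Nat.cast_mul, ← Nat.cast_mul, Nat.choose_mul_factorial_mul_factorial hle]
  rw [hfac]
  ring

/-! ### The exponential measure and its moments -/

noncomputable def expν : Measure ℝ :=
  (volume.restrict (Ioi (0 : ℝ))).withDensity fun s => ENNReal.ofReal (Real.exp (-s))

lemma expν_moment (m : ℕ) :
    ∫⁻ s, ENNReal.ofReal s ^ m ∂expν = ENNReal.ofReal (m.factorial : ℝ) := by
  have hmeasd : Measurable fun s : ℝ => ENNReal.ofReal (Real.exp (-s)) :=
    ENNReal.measurable_ofReal.comp (Real.continuous_exp.measurable.comp measurable_neg)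
  have hmeasf : Measurable fun s : ℝ => ENNReal.ofReal s ^ m :=
    ENNReal.measurable_ofReal.pow_const m
  rw [expν, lintegral_withDensity_eq_lintegral_mul _ hmeasd hmeasf]
  have hint : IntegrableOn (fun x : ℝ => Real.exp (-x) * x ^ m) (Ioi 0) := by
    have := Real.GammaIntegral_convergent (s := (m : ℝ) + 1) (by positivity)
    apply this.congr_fun _ measurableSet_Ioi
    intro x hx
    simp [Real.rpow_natCast]
  have h1 : ∫⁻ s in Ioi (0 : ℝ),
      ((fun s : ℝ => ENNReal.ofReal (Real.exp (-s))) * fun s : ℝ => ENNReal.ofReal s ^ m) s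
      = ∫⁻ s in Ioi (0 : ℝ), ENNReal.ofReal (Real.exp (-s) * s ^ m) := by
    apply setLIntegral_congr_fun measurableSet_Ioi
    intro x hx
    simp only [Pi.mul_apply]
    rw [ENNReal.ofReal_mul (Real.exp_nonneg _), ENNReal.ofReal_pow hx.le]
  rw [h1, ← ofReal_integral_eq_lintegral_ofReal hint]
  · have h2 : ∫ x in Ioi (0 : ℝ), Real.exp (-x) * x ^ m = Real.Gamma ((m : ℝ) + 1) := by
      rw [Real.Gamma_eq_integral (by positivity)]
      apply setIntegral_congr_fun measurableSet_Ioi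
      intro x hx
      simp [Real.rpow_natCast]
    rw [h2, Real.Gamma_nat_eq_factorial]
  · filter_upwards [ae_restrict_mem measurableSet_Ioi] with x hx
    have : (0:ℝ) < x := hx
    positivity

instance expν_prob : IsProbabilityMeasure expν := by
  constructor
  have h := expν_moment 0
  simp only [pow_zero, lintegral_one, Nat.factorial_zero, Nat.cast_one, ENNReal.ofReal_one] at h
  exact h

/-! ### The product probability space attached to a list -/

def Omg : List ℝ → Type
  | [] => PUnit
  | _ :: l => ℝ × Omg l

instance OmgMS : ∀ l : List ℝ, MeasurableSpace (Omg l)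
  | [] => inferInstanceAs (MeasurableSpace PUnit)
  | _ :: l =>
      letI := OmgMS l
      inferInstanceAs (MeasurableSpace (ℝ × Omg l))

noncomputable def μL : ∀ l : List ℝ, Measure (Omg l)
  | [] => Measure.dirac PUnit.unit
  | _ :: l => (expν.prod (μL l) : Measure (ℝ × Omg l))

instance μL_prob : ∀ l : List ℝ, IsProbabilityMeasure (μL l)
  | [] => inferInstanceAs (IsProbabilityMeasure (Measure.dirac PUnit.unit))
  | _ :: l => by
      haveI := μL_prob l
      exact inferInstanceAs (IsProbabilityMeasure (expν.prod (μL l)))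

noncomputable def XL : ∀ l : List ℝ, Omg l → ℝ≥0∞
  | [] => fun _ => 0
  | a :: l => fun ω : ℝ × Omg l => ENNReal.ofReal a * ENNReal.ofReal ω.1 + XL l ω.2

lemma XL_measurable : ∀ l : List ℝ, Measurable (XL l)
  | [] => measurable_const
  | a :: l => by
      have ih := XL_measurable l
      exact (measurable_const.mul (ENNReal.measurable_ofReal.comp measurable_fst)).add
        (ih.comp measurable_snd)

/-! ### The moment representation -/

lemma rep : ∀ (l : List ℝ), (∀ a ∈ l, 0 ≤ a) → ∀ m : ℕ,
    ∫⁻ ω, XL l ω ^ m ∂(μL l) = ENNReal.ofReal (Psi m l)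
  | [], _, m => by
      show ∫⁻ ω, (0 : ℝ≥0∞) ^ m ∂(Measure.dirac PUnit.unit) = _
      rw [lintegral_dirac]
      cases m with
      | zero => simp [Psi_zero]
      | succ m => simp [Psi_nil]
  | a :: l, h, m => by
      have ha : 0 ≤ a := h a (List.mem_cons_self)
      have hl : ∀ b ∈ l, 0 ≤ b := fun b hb => h b (List.mem_cons_of_mem a hb)
      haveI := μL_prob l
      have hYm := XL_measurable l
      show ∫⁻ ω : ℝ × Omg l,
          (ENNReal.ofReal a * ENNReal.ofReal ω.1 + XL l ω.2) ^ m ∂(expν.prod (μL l)) = _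
      have hpt : ∀ ω : ℝ × Omg l,
          (ENNReal.ofReal a * ENNReal.ofReal ω.1 + XL l ω.2) ^ m
          = ∑ i ∈ Finset.range (m + 1),
              (ENNReal.ofReal a ^ i * (m.choose i : ℝ≥0∞)) *
                (ENNReal.ofReal ω.1 ^ i * XL l ω.2 ^ (m - i)) := by
        intro ω
        rw [add_pow]
        apply Finset.sum_congr rfl
        intro i _
        ring
      have hmeas : ∀ i ∈ Finset.range (m + 1), Measurable fun ω : ℝ × Omg l =>
          (ENNReal.ofReal a ^ i * (m.choose i : ℝ≥0∞)) *
            (ENNReal.ofReal ω.1 ^ i * XL l ω.2 ^ (m - i)) := by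
        intro i _
        exact measurable_const.mul
          (((ENNReal.measurable_ofReal.comp measurable_fst).pow_const i).mul
            ((hYm.comp measurable_snd).pow_const (m - i)))
      calc ∫⁻ ω : ℝ × Omg l,
            (ENNReal.ofReal a * ENNReal.ofReal ω.1 + XL l ω.2) ^ m ∂(expν.prod (μL l))
          = ∫⁻ ω : ℝ × Omg l, ∑ i ∈ Finset.range (m + 1),
              (ENNReal.ofReal a ^ i * (m.choose i : ℝ≥0∞)) *
                (ENNReal.ofReal ω.1 ^ i * XL l ω.2 ^ (m - i)) ∂(expν.prod (μL l)) := by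
            exact lintegral_congr hpt
        _ = ∑ i ∈ Finset.range (m + 1), ∫⁻ ω : ℝ × Omg l,
              (ENNReal.ofReal a ^ i * (m.choose i : ℝ≥0∞)) *
                (ENNReal.ofReal ω.1 ^ i * XL l ω.2 ^ (m - i)) ∂(expν.prod (μL l)) := by
            exact lintegral_finset_sum' _ fun i hi => (hmeas i hi).aemeasurable
        _ = ∑ i ∈ Finset.range (m + 1),
              (ENNReal.ofReal a ^ i * (m.choose i : ℝ≥0∞)) *
                (ENNReal.ofReal (i.factorial : ℝ) * ENNReal.ofReal (Psi (m - i) l)) := by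
            apply Finset.sum_congr rfl
            intro i _
            rw [lintegral_const_mul' _ _
              (ENNReal.mul_ne_top (ENNReal.pow_ne_top ENNReal.ofReal_ne_top)
                (ENNReal.natCast_ne_top _))]
            congr 1
            rw [lintegral_prod_mul (ENNReal.measurable_ofReal.pow_const i).aemeasurable
              ((hYm.pow_const (m - i)).aemeasurable)]
            rw [expν_moment, rep l hl (m - i)]
        _ = ENNReal.ofReal (Psi m (a :: l)) := by
            rw [Psi_cons]
            rw [ENNReal.ofReal_sum_of_nonneg]
            · apply Finset.sum_congr rfl
              intro i _
              have hP := Psi_nonneg (m - i) l hl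
              rw [ENNReal.ofReal_mul (by positivity), ENNReal.ofReal_mul (by positivity),
                ENNReal.ofReal_mul (by positivity), ENNReal.ofReal_pow ha]
              simp only [ENNReal.ofReal_natCast]
              ring
            · intro i _
              have hP := Psi_nonneg (m - i) l hl
              positivity

/-! ### Log-convexity via Cauchy–Schwarz (Hölder) -/

lemma psi_logconvex (A : List ℝ) (hA : ∀ a ∈ A, 0 ≤ a) (n : ℕ) :
    Psi (n + 1) A ^ 2 ≤ Psi n A * Psi (n + 2) A := by
  haveI := μL_prob A
  have hXm := XL_measurable A
  have hconj : Real.HolderConjugate 2 2 := Real.HolderConjugate.two_two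
  set f : Omg A → ℝ≥0∞ := fun ω => XL A ω ^ ((n : ℝ) / 2) with hf
  set g : Omg A → ℝ≥0∞ := fun ω => XL A ω ^ (((n : ℝ) + 2) / 2) with hg
  have hfm : AEMeasurable f (μL A) := (hXm.pow measurable_const).aemeasurable
  have hgm : AEMeasurable g (μL A) := (hXm.pow measurable_const).aemeasurable
  have hH := ENNReal.lintegral_mul_le_Lp_mul_Lq (μL A) hconj hfm hgm
  have h1 : ∀ ω, (f * g) ω = XL A ω ^ (n + 1) := by
    intro ω
    simp only [Pi.mul_apply, hf, hg]
    rw [← ENNReal.rpow_add_of_nonneg _ _ (by positivity) (by positivity)]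
    rw [show (n : ℝ) / 2 + ((n : ℝ) + 2) / 2 = ((n + 1 : ℕ) : ℝ) by push_cast; ring,
      ENNReal.rpow_natCast]
  have h2 : ∀ ω, f ω ^ (2 : ℝ) = XL A ω ^ n := by
    intro ω
    simp only [hf]
    rw [← ENNReal.rpow_mul, show (n : ℝ) / 2 * 2 = ((n : ℕ) : ℝ) by push_cast; ring,
      ENNReal.rpow_natCast]
  have h3 : ∀ ω, g ω ^ (2 : ℝ) = XL A ω ^ (n + 2) := by
    intro ω
    simp only [hg]
    rw [← ENNReal.rpow_mul, show ((n : ℝ) + 2) / 2 * 2 = ((n + 2 : ℕ) : ℝ) by push_cast; ring,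
      ENNReal.rpow_natCast]
  have e1 : ∫⁻ ω, (f * g) ω ∂(μL A) = ENNReal.ofReal (Psi (n + 1) A) := by
    rw [lintegral_congr h1, rep A hA (n + 1)]
  have e2 : ∫⁻ ω, f ω ^ (2 : ℝ) ∂(μL A) = ENNReal.ofReal (Psi n A) := by
    rw [lintegral_congr h2, rep A hA n]
  have e3 : ∫⁻ ω, g ω ^ (2 : ℝ) ∂(μL A) = ENNReal.ofReal (Psi (n + 2) A) := by
    rw [lintegral_congr h3, rep A hA (n + 2)]
  rw [e1, e2, e3] at hH
  have hsq := pow_le_pow_left' hH 2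
  rw [mul_pow] at hsq
  have hhalf : ∀ x : ℝ≥0∞, (x ^ (1 / 2 : ℝ)) ^ (2 : ℕ) = x := by
    intro x
    rw [← ENNReal.rpow_natCast (x ^ (1 / 2 : ℝ)) 2, ← ENNReal.rpow_mul]
    norm_num
  rw [hhalf, hhalf] at hsq
  have hP1 := Psi_nonneg (n + 1) A hA
  have hPn := Psi_nonneg n A hA
  have hPn2 := Psi_nonneg (n + 2) A hA
  rw [← ENNReal.ofReal_pow hP1, ← ENNReal.ofReal_mul hPn] at hsq
  exact (ENNReal.ofReal_le_ofReal_iff (by positivity)).mp hsq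

lemma psi_lyapunov (A : List ℝ) (hA : ∀ a ∈ A, 0 ≤ a) :
    ∀ k : ℕ, Psi k A ^ (k + 1) ≤ Psi (k + 1) A ^ k := by
  intro k
  induction k with
  | zero => simp [Psi_zero]
  | succ k ih =>
    rcases eq_or_lt_of_le (Psi_nonneg (k + 1) A hA) with h0 | hpos
    · rw [← h0, zero_pow (by omega)]
      exact pow_nonneg (Psi_nonneg _ _ hA) _
    · have lc := psi_logconvex A hA k
      have h1 : (Psi (k + 1) A ^ 2) ^ (k + 1) ≤ (Psi k A * Psi (k + 2) A) ^ (k + 1) :=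
        pow_le_pow_left₀ (sq_nonneg _) lc (k + 1)
      rw [mul_pow, ← pow_mul] at h1
      have h2 : Psi k A ^ (k + 1) * Psi (k + 2) A ^ (k + 1)
          ≤ Psi (k + 1) A ^ k * Psi (k + 2) A ^ (k + 1) :=
        mul_le_mul_of_nonneg_right ih (pow_nonneg (Psi_nonneg _ _ hA) _)
      have h3 : Psi (k + 1) A ^ (2 * (k + 1)) ≤ Psi (k + 1) A ^ k * Psi (k + 2) A ^ (k + 1) :=
        le_trans h1 h2
      have hexp : 2 * (k + 1) = k + (k + 2) := by ring
      rw [hexp, pow_add] at h3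
      exact le_of_mul_le_mul_left h3 (pow_pos hpos k)

theorem stmt_4 (k : ℕ) (hk : 2 ≤ k) (A : List ℝ) (hA : ∀ a ∈ A, 0 ≤ a) :
    Psi (k - 1) A ^ k ≤ Psi k A ^ (k - 1) := by
  have h := psi_lyapunov A hA (k - 1)
  have hk1 : k - 1 + 1 = k := by omega
  rwa [hk1] at h
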